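/- For all positive integers m and n, the number of period knot (m,n)-mosaics satisfies D_P^{(m,n)} = tr((X_m^+ + O_m^+)^n). -/

import Mathlib

/-- Connection point on the left edge, for each of the eleven mosaic tiles `T_0, …, T_10`. -/
def cpL : Fin 11 → Bool := ![false, true, false, false, true, true, false, true, true, true, true]
/-- Connection point on the right edge. -/
def cpR : Fin 11 → Bool := ![false, false, true, true, false, true, false, true, true, true, true]
/-- Connection point on the top edge. -/
def cpT : Fin 11 → Bool := ![false, false, false, true, true, false, true, true, true, true, true]
/-- Connection point on the bottom edge. -/
def cpB : Fin 11 → Bool := ![false, true, true, false, false, false, true, true, true, true, true]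

/-- An `(m,n)`-mosaic: an `m × n` matrix of mosaic tiles (row `i`, column `j`). -/
abbrev Mosaic (m n : ℕ) := Fin m → Fin n → Fin 11

/-- Suitably connected: contiguous tiles agree about connection points on their common edge. -/
def SuitablyConnected {m n : ℕ} (M : Mosaic m n) : Prop :=
  (∀ (i : Fin m) (j : Fin n) (h : j.val + 1 < n),
      cpR (M i j) = cpL (M i ⟨j.val + 1, h⟩)) ∧
  (∀ (i : Fin m) (h : i.val + 1 < m) (j : Fin n),
      cpB (M i j) = cpT (M ⟨i.val + 1, h⟩ j))

/-- Suitably ∂-connected: tiles on opposite ends of a row (resp. column) agree about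
connection points on the outer boundary edges. -/
def SuitablyBdryConnected {m n : ℕ} (M : Mosaic m n) : Prop :=
  (∀ (i : Fin m) (j j' : Fin n), j.val = 0 → j'.val = n - 1 →
      cpL (M i j) = cpR (M i j')) ∧
  (∀ (i i' : Fin m) (j : Fin n), i.val = 0 → i'.val = m - 1 →
      cpT (M i j) = cpB (M i' j))

/-- A period knot `(m,n)`-mosaic. -/
def PeriodKnot {m n : ℕ} (M : Mosaic m n) : Prop :=
  SuitablyConnected M ∧ SuitablyBdryConnected M

/-- `D_P^{(m,n)}`, the number of period knot `(m,n)`-mosaics. -/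
noncomputable def DP (m n : ℕ) : ℕ := Nat.card {M : Mosaic m n // PeriodKnot M}

/-- No connection points on the boundary of the mosaic. -/
def BoundaryFree {m n : ℕ} (M : Mosaic m n) : Prop :=
  ∀ (i : Fin m) (j : Fin n),
    (j.val = 0 → cpL (M i j) = false) ∧ (j.val = n - 1 → cpR (M i j) = false) ∧
    (i.val = 0 → cpT (M i j) = false) ∧ (i.val = m - 1 → cpB (M i j) = false)

/-- `D^{(m,n)}`, the number of knot `(m,n)`-mosaics. -/
noncomputable def DK (m n : ℕ) : ℕ :=
  Nat.card {M : Mosaic m n // SuitablyConnected M ∧ BoundaryFree M}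

/-- Subtract `x` from the index `i`, modulo `m`. -/
def shiftIdx {m : ℕ} (x : ℤ) (i : Fin m) : Fin m :=
  ⟨(((i : ℤ) - x) % (m : ℤ)).toNat, by
    have hm : (0 : ℤ) < (m : ℤ) := by exact_mod_cast i.pos
    have h1 := Int.emod_lt_of_pos ((i : ℤ) - x) hm
    have h2 := Int.emod_nonneg ((i : ℤ) - x) (by omega : (m : ℤ) ≠ 0)
    omega⟩

/-- The cyclic rotation `t_{x,y}`: `(t_{x,y} M)_{i,j} = M_{i-x, j-y}` (indices mod `m`, `n`). -/
def tshift {m n : ℕ} (x y : ℤ) (M : Mosaic m n) : Mosaic m n :=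
  fun i j => M (shiftIdx x i) (shiftIdx y j)

/-- `M` is a `(p,q)`-f.period mosaic: `p` is the least positive integer with `M = t_{p,0}(M)`
and `q` is the least positive integer with `M = t_{0,q}(M)`. -/
def IsFPeriod {m n : ℕ} (p q : ℕ) (M : Mosaic m n) : Prop :=
  IsLeast {a : ℕ | 0 < a ∧ M = tshift (a : ℤ) 0 M} p ∧
  IsLeast {b : ℕ | 0 < b ∧ M = tshift 0 (b : ℤ) M} q

/-- `d_{p,q}`: the number of `(p,q)`-f.period knot `(m,n)`-mosaics. -/
noncomputable def dFP (m n p q : ℕ) : ℕ :=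
  Nat.card {M : Mosaic m n // PeriodKnot M ∧ IsFPeriod p q M}

/-- Equivalence of period knot mosaics under cyclic rotations of rows and columns. -/
def torRel (m n : ℕ) (A B : {M : Mosaic m n // PeriodKnot M}) : Prop :=
  ∃ x y : ℤ, tshift x y A.val = B.val

/-- `D_T^{(m,n)}`, the number of toroidal knot `(m,n)`-mosaics. -/
noncomputable def DT (m n : ℕ) : ℕ := Nat.card (Quot (torRel m n))

/-- `M` is a `p_{(k,1)}`-f.period knot `(p,p)`-mosaic: not `(1,1)`-f.period and `M = t_{k,1}(M)`. -/
def IsPk1FPeriod {p : ℕ} (k : ℕ) (M : Mosaic p p) : Prop :=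
  ¬ IsFPeriod 1 1 M ∧ M = tshift (k : ℤ) 1 M

/-- `d_{p_{(k,1)}}`: the number of `p_{(k,1)}`-f.period knot `(p,p)`-mosaics. -/
noncomputable def dPk (p k : ℕ) : ℕ :=
  Nat.card {M : Mosaic p p // PeriodKnot M ∧ IsPk1FPeriod k M}

/-- `d_{p²}`: the number of period knot `(p,p)`-mosaics that are not `(1,1)`-, not `(1,p)`-
and not `p_{(k,1)}`-f.period for any `k`. -/
noncomputable def dPsq (p : ℕ) : ℕ :=
  Nat.card {M : Mosaic p p // PeriodKnot M ∧ ¬ IsFPeriod 1 1 M ∧ ¬ IsFPeriod 1 p M ∧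
    ∀ k < p, ¬ IsPk1FPeriod k M}

/-- Entries of the pair `(X_k, O_k)` of `2^k × 2^k` matrices defined by the block recursion
`X_{k+1} = [[X_k, O_k], [O_k, X_k]]`, `O_{k+1} = [[O_k, X_k], [X_k, 4 O_k]]`,
seeded with `X_0 = O_0 = [1]` (the most significant bit selects the block). -/
def matsXO : ℕ → ℕ → ℕ → ℕ × ℕ
  | 0, _, _ => (1, 1)
  | k + 1, i, j =>
    let v := matsXO k (i % 2 ^ k) (j % 2 ^ k)
    if i / 2 ^ k % 2 = 0 then
      if j / 2 ^ k % 2 = 0 then (v.1, v.2) else (v.2, v.1)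
    else
      if j / 2 ^ k % 2 = 0 then (v.2, v.1) else (v.1, 4 * v.2)

/-- The matrix `X_k`. -/
def Xmat (m : ℕ) : Matrix (Fin (2 ^ m)) (Fin (2 ^ m)) ℕ :=
  Matrix.of fun i j => (matsXO m i j).1

/-- The matrix `O_k`. -/
def Omat (m : ℕ) : Matrix (Fin (2 ^ m)) (Fin (2 ^ m)) ℕ :=
  Matrix.of fun i j => (matsXO m i j).2

/-- Entries of the quadruple `(X_k^+, X_k^-, O_k^+, O_k^-)` of `2^k × 2^k` matrices defined by
the block recursions `X_{k+1}^+ = [[X_k^+, O_k^-],[O_k^-, X_k^+]]`,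
`X_{k+1}^- = [[X_k^-, O_k^+],[O_k^+, X_k^-]]`, `O_{k+1}^+ = [[O_k^+, X_k^-],[X_k^-, 4 O_k^+]]`,
`O_{k+1}^- = [[O_k^-, X_k^+],[X_k^+, 4 O_k^-]]`, seeded with `X_0^+ = O_0^+ = [1]`,
`X_0^- = O_0^- = [0]` (the most significant bit selects the block). -/
def matsPM : ℕ → ℕ → ℕ → ℕ × ℕ × ℕ × ℕ
  | 0, _, _ => (1, 0, 1, 0)
  | k + 1, i, j =>
    let v := matsPM k (i % 2 ^ k) (j % 2 ^ k)
    match v with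
    | (xp, xm, op, om) =>
      if i / 2 ^ k % 2 = 0 then
        if j / 2 ^ k % 2 = 0 then (xp, xm, op, om) else (om, op, xm, xp)
      else
        if j / 2 ^ k % 2 = 0 then (om, op, xm, xp) else (xp, xm, 4 * op, 4 * om)

/-- The matrix `X_m^+`. -/
def Xplus (m : ℕ) : Matrix (Fin (2 ^ m)) (Fin (2 ^ m)) ℕ :=
  Matrix.of fun i j => (matsPM m i j).1
/-- The matrix `X_m^-`. -/
def Xminus (m : ℕ) : Matrix (Fin (2 ^ m)) (Fin (2 ^ m)) ℕ :=
  Matrix.of fun i j => (matsPM m i j).2.1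
/-- The matrix `O_m^+`. -/
def Oplus (m : ℕ) : Matrix (Fin (2 ^ m)) (Fin (2 ^ m)) ℕ :=
  Matrix.of fun i j => (matsPM m i j).2.2.1
/-- The matrix `O_m^-`. -/
def Ominus (m : ℕ) : Matrix (Fin (2 ^ m)) (Fin (2 ^ m)) ℕ :=
  Matrix.of fun i j => (matsPM m i j).2.2.2

/-- The boundary state (a word in `{o,x}^m`) encoded by `a : Fin (2^m)` in reverse
lexicographic order: the first position is the least significant bit. -/
def stateOf {m : ℕ} (a : Fin (2 ^ m)) : Fin m → Bool := fun r => (a : ℕ).testBit r.val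

/-- The `l`-state of a mosaic. -/
def lState {m n : ℕ} (hn : 0 < n) (M : Mosaic m n) : Fin m → Bool :=
  fun i => cpL (M i ⟨0, hn⟩)
/-- The `r`-state of a mosaic. -/
def rState {m n : ℕ} (hn : 0 < n) (M : Mosaic m n) : Fin m → Bool :=
  fun i => cpR (M i ⟨n - 1, Nat.sub_lt hn Nat.one_pos⟩)
/-- The `t`-state of a mosaic. -/
def tState {m n : ℕ} (hm : 0 < m) (M : Mosaic m n) : Fin n → Bool :=
  fun j => cpT (M ⟨0, hm⟩ j)
/-- The `b`-state of a mosaic. -/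
def bState {m n : ℕ} (hm : 0 < m) (M : Mosaic m n) : Fin n → Bool :=
  fun j => cpB (M ⟨m - 1, Nat.sub_lt hm Nat.one_pos⟩ j)

/-- The state matrix `N^{(m,n)+}`: its `(a,b)` entry counts the suitably connected
`(m,n)`-mosaics whose `t`-state equals its `b`-state, whose `l`-state is the `a`-th state
and whose `r`-state is the `b`-th state. -/
noncomputable def Nplus (m n : ℕ) (hm : 0 < m) (hn : 0 < n) :
    Matrix (Fin (2 ^ m)) (Fin (2 ^ m)) ℕ :=
  Matrix.of fun a b => Nat.card {M : Mosaic m n // SuitablyConnected M ∧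
    tState hm M = bState hm M ∧ lState hn M = stateOf a ∧ rState hn M = stateOf b}

/-- The index map `α` for `tr^{(k)}`: cyclic shift by `k` positions of the `p`-bit binary
representation, i.e. `α(i) ≡ 2^k i (mod 2^p - 1)` for `0 < i < 2^p - 1`, `α(0) = 0`,
`α(2^p-1) = 2^p-1`. -/
def alphaIdx (p k : ℕ) (i : Fin (2 ^ p)) : Fin (2 ^ p) :=
  if h : (i : ℕ) = 2 ^ p - 1 then i
  else ⟨(2 ^ k * (i : ℕ)) % (2 ^ p - 1), by
    have h1 : 0 < 2 ^ p := Nat.two_pow_pos p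
    have h2 : (i : ℕ) < 2 ^ p := i.isLt
    have h3 : 0 < 2 ^ p - 1 := by omega
    have h4 := Nat.mod_lt (2 ^ k * (i : ℕ)) h3
    omega⟩

/-- The twisted trace `tr^{(k)}(A) = Σ_i A_{i+1, α(i)+1}`. -/
def trk (p k : ℕ) (A : Matrix (Fin (2 ^ p)) (Fin (2 ^ p)) ℕ) : ℕ :=
  ∑ i, A i (alphaIdx p k i)


section AuxPKM
open Matrix

variable {X : Type*} [Finite X] {σ : Type*} [Fintype σ] [DecidableEq σ]

/-- weight matrix of a finite "tile" type with incoming and outgoing states -/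
noncomputable def wmatAux (top bot : X → σ) (ok : X → Prop) : Matrix σ σ ℕ :=
  Matrix.of fun s t => Nat.card {x : X // ok x ∧ top x = s ∧ bot x = t}

lemma card_fiber_sum_aux {Y : Type*} [Finite Y] (P : Y → Prop) (f : Y → σ) :
    Nat.card {y : Y // P y} = ∑ s : σ, Nat.card {y : Y // P y ∧ f y = s} := by
  classical
  have := Fintype.ofFinite Y
  calc Nat.card {y : Y // P y}
      = Nat.card ((s : σ) × {y : {y : Y // P y} // f y.1 = s}) :=
        Nat.card_congr (Equiv.sigmaFiberEquiv (fun y : {y : Y // P y} => f y.1)).symm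
    _ = ∑ s : σ, Nat.card {y : {y : Y // P y} // f y.1 = s} := by
        simp [Nat.card_eq_fintype_card, Fintype.card_sigma]
    _ = ∑ s : σ, Nat.card {y : Y // P y ∧ f y = s} := by
        refine Finset.sum_congr rfl fun s _ => ?_
        exact Nat.card_congr (Equiv.subtypeSubtypeEquivSubtypeInter P (fun y => f y = s))

theorem chain_count_aux (top bot : X → σ) :
    ∀ (n : ℕ) (ok : Fin (n+1) → X → Prop) (s t : σ),
    Nat.card {c : Fin (n+1) → X // (∀ r, ok r (c r)) ∧
        (∀ r : Fin n, bot (c r.castSucc) = top (c r.succ)) ∧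
        top (c 0) = s ∧ bot (c (Fin.last n)) = t} =
      (List.ofFn (fun r => wmatAux top bot (ok r))).prod s t := by
  intro n
  induction n with
  | zero =>
    intro ok s t
    rw [show (List.ofFn fun r : Fin 1 => wmatAux top bot (ok r)) = [wmatAux top bot (ok 0)] by
      simp [List.ofFn_succ], List.prod_singleton]
    refine Nat.card_congr ((Equiv.funUnique (Fin 1) X).subtypeEquiv fun c => ?_)
    simp only [Equiv.funUnique_apply]
    constructor
    · rintro ⟨h1, _, h3, h4⟩
      exact ⟨h1 0, h3, h4⟩
    · rintro ⟨h1, h3, h4⟩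
      exact ⟨fun r => by fin_cases r <;> exact h1, fun r => r.elim0, h3, h4⟩
  | succ n ih =>
    intro ok s t
    rw [card_fiber_sum_aux _ (fun c : Fin (n+2) → X => top (c 1))]
    have key : ∀ u : σ,
        Nat.card {c : Fin (n+2) → X // ((∀ r, ok r (c r)) ∧
          (∀ r : Fin (n+1), bot (c r.castSucc) = top (c r.succ)) ∧
          top (c 0) = s ∧ bot (c (Fin.last (n+1))) = t) ∧ top (c 1) = u} =
        (wmatAux top bot (ok 0)) s u *
          (List.ofFn fun r : Fin (n+1) => wmatAux top bot (ok r.succ)).prod u t := by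
      intro u
      rw [← ih (fun r => ok r.succ) u t, show (wmatAux top bot (ok 0)) s u =
        Nat.card {x : X // ok 0 x ∧ top x = s ∧ bot x = u} from rfl, ← Nat.card_prod]
      refine Nat.card_congr ?_
      refine ⟨fun c => (⟨c.1 0, ?_, ?_, ?_⟩, ⟨Fin.tail c.1, ?_, ?_, ?_, ?_⟩),
        fun p => ⟨Fin.cons p.1.1 p.2.1, ⟨⟨?_, ?_, ?_, ?_⟩, ?_⟩⟩, ?_, ?_⟩
      · exact c.2.1.1 0
      · exact c.2.1.2.2.1
      · have := c.2.1.2.1 0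
        simpa using this.trans c.2.2
      · exact fun r => c.2.1.1 r.succ
      · intro r
        have := c.2.1.2.1 r.succ
        simp only [Fin.tail, ← Fin.succ_castSucc]
        exact this
      · exact c.2.2
      · have := c.2.1.2.2.2
        simp only [Fin.tail, Fin.succ_last]
        exact this
      · intro r
        refine Fin.cases ?_ ?_ r
        · simpa using p.1.2.1
        · intro r'; simpa using p.2.2.1 r'
      · intro r
        refine Fin.cases ?_ ?_ r
        · simpa using p.1.2.2.2.trans p.2.2.2.2.1.symm
        · intro r'
          simp only [← Fin.succ_castSucc, Fin.cons_succ]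
          exact p.2.2.2.1 r'
      · simpa using p.1.2.2.1
      · rw [← Fin.succ_last]; simpa using p.2.2.2.2.2
      · simpa using p.2.2.2.2.1
      · intro c
        apply Subtype.ext
        exact Fin.cons_self_tail c.1
      · intro p
        refine Prod.ext (Subtype.ext ?_) (Subtype.ext ?_)
        · simp
        · rfl
    rw [Finset.sum_congr rfl fun u _ => key u]
    conv_rhs => rw [List.ofFn_succ, List.prod_cons]
    rw [Matrix.mul_apply]

end AuxPKM

section TileAux
open Matrix

/-- explicit tile counts by the four boundary connection bits -/
def cntAux (l r u v : Bool) : ℕ :=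
  if ((l != r) != (u != v)) then 0 else if l && r && u && v then 4 else 1

noncomputable def B2Aux (l r : Bool) : Matrix Bool Bool ℕ :=
  wmatAux cpT cpB (fun x : Fin 11 => cpL x = l ∧ cpR x = r)

lemma B2Aux_apply (l r u v : Bool) : B2Aux l r u v = cntAux l r u v := by
  have h : B2Aux l r u v = (Finset.univ.filter
      (fun x : Fin 11 => (cpL x = l ∧ cpR x = r) ∧ cpT x = u ∧ cpB x = v)).card := by
    rw [B2Aux, wmatAux, Matrix.of_apply, Nat.card_eq_fintype_card, Fintype.card_subtype]
  rw [h]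
  cases l <;> cases r <;> cases u <;> cases v <;> decide

noncomputable def LrowAux (m a b : ℕ) : List (Matrix Bool Bool ℕ) :=
  List.ofFn fun r : Fin m => B2Aux (a.testBit r) (b.testBit r)

lemma prodPMAux : ∀ m a b : ℕ, a < 2^m → b < 2^m →
    matsPM m a b = ((LrowAux m a b).prod false false, (LrowAux m a b).prod true false,
      (LrowAux m a b).prod true true, (LrowAux m a b).prod false true) := by
  intro m
  induction m with
  | zero =>
    intro a b ha hb
    interval_cases a
    interval_cases b
    simp [matsPM, LrowAux, Matrix.one_apply]
  | succ m ih =>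
    intro a b ha hb
    have hL : LrowAux (m+1) a b =
        (LrowAux m (a % 2^m) (b % 2^m)).concat (B2Aux (a.testBit m) (b.testBit m)) := by
      rw [LrowAux, List.ofFn_succ']
      congr 1
      · rw [LrowAux]
        apply congrArg
        funext r
        rw [Nat.testBit_mod_two_pow, Nat.testBit_mod_two_pow]
        simp [r.isLt]
    have h2 : (0:ℕ) < 2^m := Nat.pow_pos (by norm_num)
    have iha := ih (a % 2^m) (b % 2^m) (Nat.mod_lt _ h2) (Nat.mod_lt _ h2)
    rw [hL, List.prod_concat]
    show matsPM (m+1) a b = _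
    rw [show matsPM (m+1) a b = (match matsPM m (a % 2^m) (b % 2^m) with
      | (xp, xm, op, om) =>
        if a / 2 ^ m % 2 = 0 then
          if b / 2 ^ m % 2 = 0 then (xp, xm, op, om) else (om, op, xm, xp)
        else
          if b / 2 ^ m % 2 = 0 then (om, op, xm, xp) else (xp, xm, 4 * op, 4 * om)) from rfl,
      iha]
    have hta : a.testBit m = decide (a / 2 ^ m % 2 = 1) := Nat.testBit_eq_decide_div_mod_eq
    have htb : b.testBit m = decide (b / 2 ^ m % 2 = 1) := Nat.testBit_eq_decide_div_mod_eq
    rcases Nat.mod_two_eq_zero_or_one (a / 2^m) with h1 | h1 <;>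
      rcases Nat.mod_two_eq_zero_or_one (b / 2^m) with h3 | h3 <;>
      simp only [h1, h3, hta, htb] <;>
      norm_num <;>
      refine ⟨?_, ?_, ?_, ?_⟩ <;>
      simp [Matrix.mul_apply, Fintype.sum_bool, B2Aux_apply, cntAux, mul_comm]

noncomputable def stateEquivAux (m : ℕ) : Fin (2^m) ≃ (Fin m → Bool) := by
  refine Equiv.ofBijective stateOf ?_
  rw [Fintype.bijective_iff_injective_and_card]
  constructor
  · intro a b h
    apply Fin.ext
    apply Nat.eq_of_testBit_eq
    intro i
    by_cases hi : i < m
    · exact congrFun h ⟨i, hi⟩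
    · rw [Nat.testBit_lt_two_pow, Nat.testBit_lt_two_pow] <;>
        exact lt_of_lt_of_le (Fin.isLt _) (Nat.pow_le_pow_right (by norm_num) (le_of_not_gt hi))
  · simp [Fintype.card_fun]

@[simp] lemma stateEquivAux_apply {m : ℕ} (a : Fin (2^m)) : stateEquivAux m a = stateOf a := rfl

lemma submatrix_pow_aux {I J : Type*} [Fintype I] [Fintype J] [DecidableEq I] [DecidableEq J]
    (A : Matrix J J ℕ) (e : I ≃ J) : ∀ k : ℕ, (A.submatrix e e)^k = (A^k).submatrix e e
  | 0 => by simp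
  | k+1 => by rw [pow_succ, pow_succ, submatrix_pow_aux A e k, Matrix.submatrix_mul_equiv]

/-- left-edge state of a column -/
def colTop {m : ℕ} (c : Fin m → Fin 11) : Fin m → Bool := fun i => cpL (c i)
/-- right-edge state of a column -/
def colBot {m : ℕ} (c : Fin m → Fin 11) : Fin m → Bool := fun i => cpR (c i)
/-- vertical admissibility of a column, with wrap-around -/
def colOK {m : ℕ} (c : Fin (m+1) → Fin 11) : Prop :=
  (∀ r : Fin m, cpB (c r.castSucc) = cpT (c r.succ)) ∧ cpT (c 0) = cpB (c (Fin.last m))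

noncomputable def colA (m : ℕ) : Matrix (Fin (m+1) → Bool) (Fin (m+1) → Bool) ℕ :=
  wmatAux colTop colBot colOK

lemma colA_apply (m : ℕ) (a b : Fin (2^(m+1))) :
    colA m (stateOf a) (stateOf b) = (Xplus (m+1) + Oplus (m+1)) a b := by
  have h1 : colA m (stateOf a) (stateOf b) =
      Nat.card {c : Fin (m+1) → Fin 11 // colOK c ∧ colTop c = stateOf a ∧
        colBot c = stateOf b} := rfl
  rw [h1, card_fiber_sum_aux _ (fun c => cpT (c 0))]
  have key : ∀ u : Bool, Nat.card {c : Fin (m+1) → Fin 11 // (colOK c ∧ colTop c = stateOf a ∧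
        colBot c = stateOf b) ∧ cpT (c 0) = u} = (LrowAux (m+1) (a : ℕ) (b : ℕ)).prod u u := by
    intro u
    rw [show (LrowAux (m+1) (a : ℕ) (b : ℕ)).prod u u = (List.ofFn (fun r : Fin (m+1) =>
        wmatAux cpT cpB ((fun r x => cpL x = stateOf a r ∧ cpR x = stateOf b r) r))).prod u u
      from rfl]
    rw [← chain_count_aux cpT cpB m (fun r x => cpL x = stateOf a r ∧ cpR x = stateOf b r) u u]
    apply Nat.card_congr
    apply Equiv.subtypeEquivRight
    intro c
    constructor
    · rintro ⟨⟨⟨hchain, hwrap⟩, hl, hr⟩, hu⟩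
      exact ⟨fun r => ⟨congrFun hl r, congrFun hr r⟩, hchain, hu, hwrap.symm.trans hu⟩
    · rintro ⟨hok, hchain, hu, hv⟩
      exact ⟨⟨⟨hchain, hu.trans hv.symm⟩, funext fun r => (hok r).1,
        funext fun r => (hok r).2⟩, hu⟩
  rw [Finset.sum_congr rfl fun u _ => key u, Fintype.sum_bool]
  have hp := prodPMAux (m+1) (a : ℕ) (b : ℕ) a.isLt b.isLt
  show _ = Xplus (m+1) a b + Oplus (m+1) a b
  rw [Xplus, Oplus, Matrix.of_apply, Matrix.of_apply, hp]
  exact Nat.add_comm _ _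

end TileAux

/-- For all positive integers `m` and `n`,
`D_P^{(m,n)} = tr((X_m^+ + O_m^+)^n)`. -/
theorem period_knot_mosaic_enumeration (m n : ℕ) (hm : 0 < m) (hn : 0 < n) :
    DP m n = Matrix.trace ((Xplus m + Oplus m) ^ n) := by
  obtain ⟨m, rfl⟩ := Nat.exists_eq_succ_of_ne_zero hm.ne'
  obtain ⟨n, rfl⟩ := Nat.exists_eq_succ_of_ne_zero hn.ne'
  have hDP : DP (m+1) (n+1) = Nat.card {c : Fin (n+1) → (Fin (m+1) → Fin 11) //
      (∀ j, colOK (c j)) ∧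
      (∀ j : Fin n, colBot (c j.castSucc) = colTop (c j.succ)) ∧
      colTop (c 0) = colBot (c (Fin.last n))} := by
    apply Nat.card_congr
    refine (Equiv.piComm fun _ _ => Fin 11).subtypeEquiv fun M => ?_
    constructor
    · rintro ⟨⟨hSCh, hSCv⟩, ⟨hBh, hBv⟩⟩
      refine ⟨fun j => ⟨fun r => ?_, ?_⟩, fun j => funext fun i => ?_, funext fun i => ?_⟩
      · exact hSCv r.castSucc (Nat.succ_lt_succ r.isLt) j
      · exact hBv 0 (Fin.last m) j rfl rfl
      · exact hSCh i j.castSucc (Nat.succ_lt_succ j.isLt)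
      · exact hBh i 0 (Fin.last n) rfl rfl
    · rintro ⟨hok, hchain, hbd⟩
      refine ⟨⟨fun i j h => ?_, fun i h j => ?_⟩, ⟨fun i j j' h0 h1 => ?_,
        fun i i' j h0 h1 => ?_⟩⟩
      · exact congrFun (hchain ⟨j.val, by omega⟩) i
      · exact (hok j).1 ⟨i.val, by omega⟩
      · have h0' : j = 0 := Fin.ext h0
        have h1' : j' = Fin.last n := Fin.ext (by simpa using h1)
        subst h0' h1'
        exact congrFun hbd i
      · have h0' : i = 0 := Fin.ext h0
        have h1' : i' = Fin.last m := Fin.ext (by simpa using h1)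
        subst h0' h1'
        exact (hok j).2
  rw [hDP, card_fiber_sum_aux _ (fun c => colTop (c 0))]
  have key : ∀ s : Fin (m+1) → Bool,
      Nat.card {c : Fin (n+1) → (Fin (m+1) → Fin 11) //
        ((∀ j, colOK (c j)) ∧
        (∀ j : Fin n, colBot (c j.castSucc) = colTop (c j.succ)) ∧
        colTop (c 0) = colBot (c (Fin.last n))) ∧ colTop (c 0) = s} =
      ((colA m)^(n+1)) s s := by
    intro s
    rw [show ((colA m)^(n+1)) s s = (List.ofFn (fun r : Fin (n+1) =>
        wmatAux colTop colBot ((fun _ => colOK) r))).prod s s by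
      rw [List.ofFn_const, List.prod_replicate]; rfl]
    rw [← chain_count_aux colTop colBot n (fun _ => colOK) s s]
    apply Nat.card_congr
    apply Equiv.subtypeEquivRight
    intro c
    constructor
    · rintro ⟨⟨h1, h2, h3⟩, h4⟩
      exact ⟨h1, h2, h4, h3.symm.trans h4⟩
    · rintro ⟨h1, h2, h3, h4⟩
      exact ⟨⟨h1, h2, h3.trans h4.symm⟩, h3⟩
  rw [Finset.sum_congr rfl fun s _ => key s]
  have hXO : Xplus (m+1) + Oplus (m+1) =
      (colA m).submatrix (stateEquivAux (m+1)) (stateEquivAux (m+1)) := by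
    ext a b
    rw [Matrix.submatrix_apply, stateEquivAux_apply, stateEquivAux_apply, colA_apply]
  rw [hXO, submatrix_pow_aux]
  simp only [Matrix.trace, Matrix.diag, Matrix.submatrix_apply]
  exact (Fintype.sum_equiv (stateEquivAux (m+1))
    (fun a => ((colA m)^(n+1)) (stateEquivAux (m+1) a) (stateEquivAux (m+1) a))
    (fun s => ((colA m)^(n+1)) s s) (fun a => rfl)).symm
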